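/- Let h := gcd(f, g) in ℝ[x,y]. If there exists ξ ∈ ℂ[[t]] with h(ξ(t), t^N) = 0 and order(ξ − γ̃) > r, then g(γ(t), t^N) = 0, i.e., γ is also a Newton–Puiseux root of g. -/

import Mathlib

open PowerSeries

/-- Theorem 4(iii): if the truncated Newton–Puiseux root `γ̃` of `f` is a root
mod `r+` of `gcd(f,g)`, then `γ` is also a Newton–Puiseux root of `g`. -/
theorem root_of_g_of_truncation_root_of_gcd
    (f g : MvPolynomial (Fin 2) ℝ) (hf : f ≠ 0) (hg : g ≠ 0)
    (m₀ : ℕ) (hm₀ : ∀ j < m₀, MvPolynomial.homogeneousComponent j f = 0)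
    (hm₀' : MvPolynomial.homogeneousComponent m₀ f ≠ 0)
    (hregf : MvPolynomial.eval ![1, 0] (MvPolynomial.homogeneousComponent m₀ f) ≠ 0)
    (n₀ : ℕ) (hn₀ : ∀ j < n₀, MvPolynomial.homogeneousComponent j g = 0)
    (hn₀' : MvPolynomial.homogeneousComponent n₀ g ≠ 0)
    (hregg : MvPolynomial.eval ![1, 0] (MvPolynomial.homogeneousComponent n₀ g) ≠ 0)
    (N : ℕ) (hN : 0 < N)
    (h : MvPolynomial (Fin 2) ℝ)
    (hdvdf : h ∣ f) (hdvdg : h ∣ g)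
    (hgcd : ∀ h' : MvPolynomial (Fin 2) ℝ, h' ∣ f → h' ∣ g → h' ∣ h)
    (γ : PowerSeries ℂ)
    (hroot : MvPolynomial.aeval ![γ, (PowerSeries.X : PowerSeries ℂ) ^ N] f = 0)
    (r : ℕ)
    (hrmax : (∃ γ' : PowerSeries ℂ,
        MvPolynomial.aeval ![γ', (PowerSeries.X : PowerSeries ℂ) ^ N] f = 0 ∧ γ' ≠ γ ∧
        (γ - γ').order = (r : ℕ∞)) ∧
      ∀ γ' : PowerSeries ℂ,
        MvPolynomial.aeval ![γ', (PowerSeries.X : PowerSeries ℂ) ^ N] f = 0 → γ' ≠ γ →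
        (γ - γ').order ≤ (r : ℕ∞))
    (γt : PowerSeries ℂ)
    (hγt : ∀ k : ℕ, PowerSeries.coeff k γt =
      if k ≤ r then PowerSeries.coeff k γ else 0)
    (hξ : ∃ ξ : PowerSeries ℂ,
      MvPolynomial.aeval ![ξ, (PowerSeries.X : PowerSeries ℂ) ^ N] h = 0 ∧
      (r : ℕ∞) < (ξ - γt).order) :
    MvPolynomial.aeval ![γ, (PowerSeries.X : PowerSeries ℂ) ^ N] g = 0 := by
  obtain ⟨ξ, hξh, hξord⟩ := hξ
  -- ξ = γ
  have hξγ : ξ = γ := by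
    by_contra hne
    -- ξ is a root of f
    obtain ⟨q, rfl⟩ := hdvdf
    have hξf : MvPolynomial.aeval ![ξ, (PowerSeries.X : PowerSeries ℂ) ^ N] (h * q) = 0 := by
      rw [map_mul, hξh, zero_mul]
    have hle := hrmax.2 ξ hξf hne
    -- but order (γ - ξ) > r
    have hcoeff : ∀ i < r + 1, PowerSeries.coeff i (γ - ξ) = 0 := by
      intro i hi
      have hir : i ≤ r := Nat.lt_succ_iff.mp hi
      have h1 : PowerSeries.coeff i (ξ - γt) = 0 := by
        apply PowerSeries.coeff_of_lt_order
        exact lt_of_le_of_lt (by exact_mod_cast hir) hξord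
      have h2 := hγt i
      rw [if_pos hir] at h2
      rw [map_sub, h2, sub_eq_zero] at h1
      rw [map_sub, sub_eq_zero]
      exact h1.symm
    have hord : ((r : ℕ) + 1 : ℕ∞) ≤ (γ - ξ).order := by
      exact_mod_cast PowerSeries.nat_le_order _ _ hcoeff
    have : ((r : ℕ) : ℕ∞) < (γ - ξ).order :=
      lt_of_lt_of_le (by exact_mod_cast Nat.lt_succ_self r) hord
    exact absurd (lt_of_le_of_lt hle this) (lt_irrefl _)
  obtain ⟨q, rfl⟩ := hdvdg
  rw [map_mul, ← hξγ, hξh, zero_mul]
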